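/- Let φ = (1+√5)/2 be the golden ratio. Suppose (u_n) is a bounded real sequence with u_0 = x and u_1 = 0, and (b_n) is a sequence with b_n ∈ {-1,1} satisfying u_{n+2} = u_{n+1} + u_n - b_n for all n ≥ 0. Then for all N, |x - ∑_{n=0}^N b_n φ^{-n}| ≤ φ^{-N+1}. -/

import Mathlib

/-- Golden ratio encoder: if a bounded sequence `u` with `u 0 = x`, `u 1 = 0`
satisfies `u (n+2) = u (n+1) + u n - b n` with bits `b n ∈ {-1,1}`, then the
partial sums `∑_{n=0}^N b n φ^{-n}` approximate `x` to within `φ^{-N+1}`. -/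
theorem golden_ratio_encoder (x : ℝ) (u b : ℕ → ℝ) (C : ℝ)
    (hbound : ∀ n, |u n| ≤ C)
    (hu0 : u 0 = x) (hu1 : u 1 = 0)
    (hb : ∀ n, b n = -1 ∨ b n = 1)
    (hrec : ∀ n, u (n + 2) = u (n + 1) + u n - b n)
    (φ : ℝ) (hφ : φ = (1 + Real.sqrt 5) / 2) :
    ∀ N : ℕ, |x - ∑ n ∈ Finset.range (N + 1), b n * φ ^ (-(n : ℤ))| ≤ φ ^ (-(N : ℤ) + 1) := by
  have hs5 : Real.sqrt 5 ^ 2 = 5 := Real.sq_sqrt (by norm_num)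
  have hs5pos : (2:ℝ) < Real.sqrt 5 := by
    nlinarith [Real.sqrt_nonneg 5]
  have hφ1 : 1 < φ := by rw [hφ]; nlinarith
  have hφpos : 0 < φ := by linarith
  have hφsq : φ ^ 2 = φ + 1 := by rw [hφ]; nlinarith
  set r : ℝ := φ⁻¹ with hr
  have hrpos : 0 < r := inv_pos.mpr hφpos
  have hrφ : r * φ = 1 := inv_mul_cancel₀ (ne_of_gt hφpos)
  have hr1 : r < 1 := by
    rw [hr, inv_lt_one_iff₀]; right; exact hφ1
  have hr2 : r ^ 2 + r = 1 := by
    have : (r ^ 2 + r) * φ ^ 2 = φ ^ 2 := by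
      have : (r ^ 2 + r) * φ ^ 2 = (r * φ) ^ 2 + r * φ * φ := by ring
      rw [this, hrφ, hφsq]; ring
    have hφ2 : (0:ℝ) < φ ^ 2 := by positivity
    nlinarith
  have hz : ∀ n : ℕ, φ ^ (-(n : ℤ)) = r ^ n := by
    intro n
    rw [zpow_neg, zpow_natCast, hr, inv_pow]
  have hb1 : ∀ n, |b n| = 1 := by
    intro n
    rcases hb n with h | h <;> rw [h] <;> norm_num
  -- key telescoping identity
  have key : ∀ M : ℕ, x - ∑ n ∈ Finset.range (M + 1), b n * r ^ n
      = r ^ M * (u (M + 2) + u (M + 1) * r) := by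
    intro M
    induction M with
    | zero =>
      have h0 := hrec 0
      rw [hu1] at h0
      rw [show (0:ℕ) + 1 = 1 from rfl, Finset.sum_range_one, hu1]
      have hb0 : b 0 = x - u 2 := by rw [← hu0]; linarith
      rw [hb0]; ring
    | succ M ih =>
      rw [Finset.sum_range_succ]
      have hR := hrec (M + 1)
      have : x - (∑ n ∈ Finset.range (M + 1), b n * r ^ n + b (M + 1) * r ^ (M + 1))
          = (x - ∑ n ∈ Finset.range (M + 1), b n * r ^ n) - b (M + 1) * r ^ (M + 1) := by
        ring
      rw [this, ih]
      have h3 : u (M + 1 + 2) = u (M + 2) + u (M + 1) - b (M + 1) := hR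
      rw [show M + 1 + 2 = M + 3 from rfl] at h3
      rw [show M + 1 + 2 = M + 3 from rfl]
      rw [h3]
      linear_combination (-(u (M + 2)) * r ^ M) * hr2
  -- bound on the remainder
  have hC : 0 ≤ C := le_trans (abs_nonneg _) (hbound 0)
  set D : ℝ := C + C * r with hD
  have hDpos : 0 ≤ D := by positivity
  have hrem : ∀ M : ℕ, |x - ∑ n ∈ Finset.range (M + 1), b n * r ^ n| ≤ D * r ^ M := by
    intro M
    rw [key M, abs_mul, abs_pow, abs_of_pos hrpos]
    rw [mul_comm D _]
    apply mul_le_mul_of_nonneg_left _ (le_of_lt (pow_pos hrpos M))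
    calc |u (M + 2) + u (M + 1) * r| ≤ |u (M + 2)| + |u (M + 1) * r| := abs_add_le _ _
      _ ≤ C + C * r := by
        apply add_le_add (hbound _)
        rw [abs_mul, abs_of_pos hrpos]
        exact mul_le_mul_of_nonneg_right (hbound _) (le_of_lt hrpos)
      _ = D := rfl
  intro N
  simp only [hz]
  -- bound |S_{N+k} - S_N|
  have htail : ∀ k : ℕ,
      |∑ n ∈ Finset.range (N + k + 1), b n * r ^ n - ∑ n ∈ Finset.range (N + 1), b n * r ^ n|
        ≤ r ^ (N + 1) * (1 - r)⁻¹ := by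
    intro k
    have hsub : Finset.range (N + 1) ⊆ Finset.range (N + k + 1) := by
      apply Finset.range_subset_range.mpr; omega
    rw [← Finset.sum_Ico_eq_sub _ (by omega : N + 1 ≤ N + k + 1)]
    calc |∑ n ∈ Finset.Ico (N + 1) (N + k + 1), b n * r ^ n|
        ≤ ∑ n ∈ Finset.Ico (N + 1) (N + k + 1), |b n * r ^ n| :=
          Finset.abs_sum_le_sum_abs _ _
      _ = ∑ n ∈ Finset.Ico (N + 1) (N + k + 1), r ^ n := by
          apply Finset.sum_congr rfl
          intro n _
          rw [abs_mul, hb1, one_mul, abs_pow, abs_of_pos hrpos]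
      _ = ∑ i ∈ Finset.range (N + k + 1 - (N + 1)), r ^ (N + 1 + i) := by
          rw [Finset.sum_Ico_eq_sum_range]
      _ = r ^ (N + 1) * ∑ i ∈ Finset.range k, r ^ i := by
          rw [show N + k + 1 - (N + 1) = k from by omega, Finset.mul_sum]
          apply Finset.sum_congr rfl
          intro i _; rw [pow_add]
      _ ≤ r ^ (N + 1) * (1 - r)⁻¹ := by
          apply mul_le_mul_of_nonneg_left _ (le_of_lt (pow_pos hrpos (N + 1)))
          rw [geom_sum_eq (ne_of_lt hr1)]
          have h1rk : (0:ℝ) < 1 - r := by linarith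
          rw [div_le_iff_of_neg (by linarith : r - 1 < 0)]
          have hmo : (1 - r)⁻¹ * (r - 1) = -1 := by
            field_simp
            ring
          rw [hmo]
          have := pow_nonneg hrpos.le k
          linarith
  -- the target equals r^{N+1} * (1-r)⁻¹
  have h1r : 1 - r = r ^ 2 := by linarith
  have htar : φ ^ (-(N : ℤ) + 1) = r ^ (N + 1) * (1 - r)⁻¹ := by
    rw [h1r]
    have : (r ^ 2)⁻¹ = φ ^ 2 := by rw [hr]; simp
    rw [this]
    rw [show (-(N : ℤ) + 1) = (-(N + 1 : ℕ) : ℤ) + 2 from by push_cast; ring]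
    rw [zpow_add₀ (ne_of_gt hφpos), hz, zpow_two, sq]
  rw [htar]
  -- limiting argument
  have hfinal : ∀ k : ℕ, |x - ∑ n ∈ Finset.range (N + 1), b n * r ^ n|
      ≤ r ^ (N + 1) * (1 - r)⁻¹ + D * r ^ k := by
    intro k
    calc |x - ∑ n ∈ Finset.range (N + 1), b n * r ^ n|
        ≤ |x - ∑ n ∈ Finset.range (N + k + 1), b n * r ^ n|
          + |∑ n ∈ Finset.range (N + k + 1), b n * r ^ n
            - ∑ n ∈ Finset.range (N + 1), b n * r ^ n| := by
          apply le_trans _ (abs_add_le _ _)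
          apply le_of_eq; congr 1; ring
      _ ≤ D * r ^ (N + k) + r ^ (N + 1) * (1 - r)⁻¹ :=
          add_le_add (hrem (N + k)) (htail k)
      _ ≤ r ^ (N + 1) * (1 - r)⁻¹ + D * r ^ k := by
          rw [add_comm]
          apply add_le_add le_rfl
          apply mul_le_mul_of_nonneg_left _ hDpos
          apply pow_le_pow_of_le_one hrpos.le hr1.le
          omega
  have hlim : Filter.Tendsto (fun k : ℕ => r ^ (N + 1) * (1 - r)⁻¹ + D * r ^ k)
      Filter.atTop (nhds (r ^ (N + 1) * (1 - r)⁻¹ + D * 0)) := by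
    apply Filter.Tendsto.const_add
    exact Filter.Tendsto.const_mul D
      (tendsto_pow_atTop_nhds_zero_of_lt_one hrpos.le hr1)
  rw [mul_zero, add_zero] at hlim
  exact le_of_tendsto_of_tendsto' tendsto_const_nhds hlim hfinal
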